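/- Fix σ > 0 and ε ≥ 0. The function t ↦ Φ(t/(2σ) − εσ/t) − e^ε·Φ(−t/(2σ) − εσ/t) is monotone nondecreasing on (0, ∞). -/

import Mathlib

open MeasureTheory ProbabilityTheory Real

/-- The cumulative distribution function of the standard normal distribution. -/
noncomputable def stdNormalCDF (x : ℝ) : ℝ :=
  ∫ t in Set.Iic x, (1 / Real.sqrt (2 * Real.pi)) * Real.exp (-(t ^ 2) / 2)

noncomputable def gpdf (x : ℝ) : ℝ := (1 / Real.sqrt (2 * Real.pi)) * Real.exp (-(x ^ 2) / 2)

lemma integrable_gpdf : Integrable gpdf := by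
  have h : Integrable (fun x : ℝ => Real.exp (-(1/2 : ℝ) * x ^ 2)) := integrable_exp_neg_mul_sq (by norm_num)
  have := h.const_mul (1 / Real.sqrt (2 * Real.pi))
  convert this using 2 with x
  unfold gpdf
  ring_nf

lemma hasDerivAt_stdNormalCDF (x : ℝ) : HasDerivAt stdNormalCDF (gpdf x) x := by
  have key : ∀ y : ℝ, stdNormalCDF y = (∫ t in Set.Iic 0, gpdf t) + ∫ t in (0:ℝ)..y, gpdf t := by
    intro y
    rw [← intervalIntegral.integral_Iic_sub_Iic integrable_gpdf.integrableOn integrable_gpdf.integrableOn]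
    unfold stdNormalCDF gpdf
    ring
  have hcont : Continuous gpdf := by unfold gpdf; fun_prop
  have hd : HasDerivAt (fun y => (∫ t in Set.Iic 0, gpdf t) + ∫ t in (0:ℝ)..y, gpdf t) (gpdf x) x := by
    refine HasDerivAt.const_add _ ?_
    exact intervalIntegral.integral_hasDerivAt_right
      (hcont.intervalIntegrable _ _) (hcont.stronglyMeasurableAtFilter _ _) hcont.continuousAt
  have : stdNormalCDF = fun y => (∫ t in Set.Iic 0, gpdf t) + ∫ t in (0:ℝ)..y, gpdf t := funext key
  rw [this]; exact hd

/-- For fixed `σ > 0` and `ε ≥ 0`, the worst-case privacy-loss expression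
`t ↦ Φ(t/(2σ) − εσ/t) − e^ε·Φ(−t/(2σ) − εσ/t)` is monotone nondecreasing on `(0, ∞)`. -/
theorem analytic_gaussian_expression_monotone
    (σ ε : ℝ) (hσ : 0 < σ) (hε : 0 ≤ ε) :
    MonotoneOn
      (fun t => stdNormalCDF (t / (2 * σ) - ε * σ / t)
        - Real.exp ε * stdNormalCDF (-(t / (2 * σ)) - ε * σ / t))
      (Set.Ioi (0 : ℝ)) := by
  set f := fun t => stdNormalCDF (t / (2 * σ) - ε * σ / t)
        - Real.exp ε * stdNormalCDF (-(t / (2 * σ)) - ε * σ / t) with hf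
  have hderiv : ∀ t ∈ Set.Ioi (0:ℝ),
      HasDerivAt f (gpdf (t / (2 * σ) - ε * σ / t) / σ) t := by
    intro t ht
    have ht0 : t ≠ 0 := ne_of_gt ht
    have ha : HasDerivAt (fun t : ℝ => t / (2 * σ) - ε * σ / t)
        (1 / (2 * σ) + ε * σ / t ^ 2) t := by
      have h1 : HasDerivAt (fun t : ℝ => t / (2 * σ)) (1 / (2 * σ)) t := by
        simpa using (hasDerivAt_id t).div_const (2 * σ)
      have h2 : HasDerivAt (fun t : ℝ => ε * σ / t) (ε * σ * (-1 / t ^ 2)) t := by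
        simpa [div_eq_mul_inv] using (hasDerivAt_inv ht0).const_mul (ε * σ)
      have := h1.sub h2
      refine this.congr_deriv ?_
      field_simp
      ring
    have hb : HasDerivAt (fun t : ℝ => -(t / (2 * σ)) - ε * σ / t)
        (-(1 / (2 * σ)) + ε * σ / t ^ 2) t := by
      have h1 : HasDerivAt (fun t : ℝ => -(t / (2 * σ))) (-(1 / (2 * σ))) t := by
        exact ((hasDerivAt_id t).div_const (2 * σ)).neg
      have h2 : HasDerivAt (fun t : ℝ => ε * σ / t) (ε * σ * (-1 / t ^ 2)) t := by
        simpa [div_eq_mul_inv] using (hasDerivAt_inv ht0).const_mul (ε * σ)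
      have := h1.sub h2
      refine this.congr_deriv ?_
      field_simp
      ring
    have hA := (hasDerivAt_stdNormalCDF (t / (2 * σ) - ε * σ / t)).comp t ha
    have hB := ((hasDerivAt_stdNormalCDF (-(t / (2 * σ)) - ε * σ / t)).comp t hb).const_mul (Real.exp ε)
    have hkey : Real.exp ε * gpdf (-(t / (2 * σ)) - ε * σ / t) = gpdf (t / (2 * σ) - ε * σ / t) := by
      unfold gpdf
      rw [← mul_assoc, mul_comm (Real.exp ε), mul_assoc, ← Real.exp_add]
      congr 2
      have : (-(t / (2 * σ)) - ε * σ / t) ^ 2 = (t / (2 * σ) - ε * σ / t) ^ 2 + 2 * ε := by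
        field_simp
        ring
      rw [this]
      ring
    have := hA.sub hB
    refine this.congr_deriv ?_
    have : Real.exp ε * (gpdf (-(t / (2 * σ)) - ε * σ / t) * (-(1 / (2 * σ)) + ε * σ / t ^ 2))
        = gpdf (t / (2 * σ) - ε * σ / t) * (-(1 / (2 * σ)) + ε * σ / t ^ 2) := by
      rw [← mul_assoc, hkey]
    rw [this]
    field_simp
    ring
  have hnn : ∀ t ∈ Set.Ioi (0:ℝ), 0 ≤ gpdf (t / (2 * σ) - ε * σ / t) / σ := by
    intro t ht
    apply div_nonneg _ hσ.le
    unfold gpdf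
    positivity
  apply monotoneOn_of_deriv_nonneg (convex_Ioi 0)
  · exact fun t ht => (hderiv t ht).continuousAt.continuousWithinAt
  · rw [interior_Ioi]
    exact fun t ht => (hderiv t ht).differentiableAt.differentiableWithinAt
  · rw [interior_Ioi]
    intro t ht
    rw [(hderiv t ht).deriv]
    exact hnn t ht
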